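/- Let a₁, a₂ ∈ ℝ and let (z₁, z₂) : I → Ω × Ω be a differentiable solution of the two-point vortex system on an interval I with z₁(t) ≠ z₂(t) for all t ∈ I. Then the total energy H(t) := (1/2)·( a₁²·γ̃_Ω(z₁(t)) + a₂²·γ̃_Ω(z₂(t)) ) + a₁·a₂·( γ_Ω(z₁(t), z₂(t)) + (1/(4π))·ln(|z₁(t) − z₂(t)|²) ) is constant on I. -/

import Mathlib

open Complex Real Filter Topology

noncomputable section

/-- The gradient of a real-valued function on `ℂ ≅ ℝ²`, identified with the complex
number `∂₁ f + i·∂₂ f`. -/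
def grad (f : ℂ → ℝ) (x : ℂ) : ℂ :=
  (fderiv ℝ f x 1 : ℂ) + (fderiv ℝ f x Complex.I : ℂ) * Complex.I

/-- The regular part of the Green's function of `Ω`, expressed through the conformal map `φ`. -/
def gammaReg (φ : ℂ → ℂ) (x y : ℂ) : ℝ :=
  (1 / (2 * π)) * Real.log (‖φ x - φ y‖ / ‖x - y‖) -
    (1 / (2 * π)) * Real.log (‖1 - φ x * (starRingEnd ℂ) (φ y)‖)

/-- The Robin function of `Ω`. -/
def robin (φ : ℂ → ℂ) (x : ℂ) : ℝ :=
  (1 / (2 * π)) * Real.log (‖deriv φ x‖) -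
    (1 / (2 * π)) * Real.log (1 - ‖φ x‖ ^ 2)

/-- The right-hand side of the Kirchhoff–Routh equation for the vortex located at `w₁`,
with own strength `a₁`, the other vortex being at `w₂` with strength `a₂`. -/
def vortexRHS (φ : ℂ → ℂ) (a₁ a₂ : ℝ) (w₁ w₂ : ℂ) : ℂ :=
  ((a₁ : ℂ) / 2) * (Complex.I * grad (robin φ) w₁) +
    (a₂ : ℂ) * (Complex.I * (w₁ - w₂) / ((2 * π * ‖w₁ - w₂‖ ^ 2 : ℝ) : ℂ) +
      Complex.I * grad (fun x => gammaReg φ x w₂) w₁)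

/-! ### Auxiliary infrastructure -/

/-- `w ↦ (c * w).re` as a continuous real-linear map. -/
def mulRe (c : ℂ) : ℂ →L[ℝ] ℝ :=
  Complex.reCLM.comp ((c • (ContinuousLinearMap.id ℂ ℂ)).restrictScalars ℝ)

@[simp] lemma mulRe_apply (c w : ℂ) : mulRe c w = (c * w).re := rfl

lemma smul_mulRe (r : ℝ) (c : ℂ) : r • mulRe c = mulRe ((r : ℂ) * c) := by
  ext w
  simp [mulRe_apply, mul_assoc, Complex.re_ofReal_mul]

lemma mulRe_sub (a b : ℂ) : mulRe a - mulRe b = mulRe (a - b) := by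
  ext w
  simp [mulRe_apply, sub_mul]

lemma hasFDerivAt_normSq (z : ℂ) :
    HasFDerivAt Complex.normSq (mulRe (2 * (starRingEnd ℂ) z)) z := by
  have h1 : HasFDerivAt (fun w : ℂ => w.re * w.re + w.im * w.im)
      ((z.re • Complex.reCLM + z.re • Complex.reCLM) +
        (z.im • Complex.imCLM + z.im • Complex.imCLM)) z := by
    have hre : HasFDerivAt (fun w : ℂ => w.re) Complex.reCLM z :=
      Complex.reCLM.hasFDerivAt
    have him : HasFDerivAt (fun w : ℂ => w.im) Complex.imCLM z :=
      Complex.imCLM.hasFDerivAt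
    exact (hre.mul hre).add (him.mul him)
  have h2 : (fun w : ℂ => w.re * w.re + w.im * w.im) = Complex.normSq := by
    funext w; rw [Complex.normSq_apply]
  rw [h2] at h1
  convert h1 using 1
  ext w
  simp [mulRe, Complex.mul_re, Complex.conj_re, Complex.conj_im]
  ring

lemma hasFDerivAt_log_normSq_comp {f : ℂ → ℂ} {f' : ℂ} {x : ℂ}
    (hf : HasDerivAt f f' x) (h0 : f x ≠ 0) :
    HasFDerivAt (fun z => Real.log (Complex.normSq (f z)))
      (mulRe (((2 / Complex.normSq (f x) : ℝ) : ℂ) * ((starRingEnd ℂ) (f x) * f'))) x := by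
  have hS : HasFDerivAt Complex.normSq (mulRe (2 * (starRingEnd ℂ) (f x))) (f x) :=
    hasFDerivAt_normSq (f x)
  have hfF : HasFDerivAt f (ContinuousLinearMap.smulRight (1 : ℂ →L[ℂ] ℂ) f') x :=
    hf.hasFDerivAt
  have hfR := hfF.restrictScalars ℝ
  have hcomp := hS.comp x hfR
  have hlog := hcomp.log (by simpa [Complex.normSq_eq_zero] using h0)
  convert hlog using 1
  · rfl
  · rfl
  ext w
  simp only [mulRe, ContinuousLinearMap.coe_comp', Function.comp_apply,
    ContinuousLinearMap.coe_restrictScalars', ContinuousLinearMap.smul_apply,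
    ContinuousLinearMap.coe_smul', Pi.smul_apply, ContinuousLinearMap.coe_id', id_eq,
    ContinuousLinearMap.smulRight_apply, ContinuousLinearMap.one_apply, smul_eq_mul,
    Complex.reCLM_apply, Complex.real_smul, Function.comp, Complex.normSq_apply,
    ← Complex.ofReal_pow, ← Complex.ofReal_add, ← Complex.ofReal_inv,
    Complex.mul_re, Complex.mul_im, Complex.conj_re, Complex.conj_im, Complex.ofReal_re,
    Complex.ofReal_im, Complex.re_ofNat, Complex.im_ofNat, Complex.ofReal_mul]
  ring

lemma hasFDerivAt_log_one_sub_normSq_comp {f : ℂ → ℂ} {f' : ℂ} {x : ℂ}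
    (hf : HasDerivAt f f' x) (h1 : Complex.normSq (f x) ≠ 1) :
    HasFDerivAt (fun z => Real.log (1 - Complex.normSq (f z)))
      (mulRe (((2 / (1 - Complex.normSq (f x)) : ℝ) : ℂ) *
        (-((starRingEnd ℂ) (f x) * f')))) x := by
  have hS : HasFDerivAt Complex.normSq (mulRe (2 * (starRingEnd ℂ) (f x))) (f x) :=
    hasFDerivAt_normSq (f x)
  have hfF : HasFDerivAt f (ContinuousLinearMap.smulRight (1 : ℂ →L[ℂ] ℂ) f') x :=
    hf.hasFDerivAt
  have hcomp := hS.comp x (hfF.restrictScalars ℝ)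
  have hsub := hcomp.const_sub (1 : ℝ)
  have hlog := hsub.log (sub_ne_zero.mpr (Ne.symm h1))
  convert hlog using 1
  · rfl
  · rfl
  ext w
  simp only [mulRe, ContinuousLinearMap.coe_comp', Function.comp_apply,
    ContinuousLinearMap.coe_restrictScalars', ContinuousLinearMap.smul_apply,
    ContinuousLinearMap.coe_smul', Pi.smul_apply, ContinuousLinearMap.coe_id', id_eq,
    ContinuousLinearMap.smulRight_apply, ContinuousLinearMap.one_apply, smul_eq_mul,
    ContinuousLinearMap.neg_apply, ContinuousLinearMap.coe_sub', Pi.sub_apply,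
    Complex.reCLM_apply, Complex.real_smul, Function.comp, Complex.normSq_apply,
    ← Complex.ofReal_pow, ← Complex.ofReal_add, ← Complex.ofReal_inv,
    Complex.mul_re, Complex.mul_im, Complex.conj_re, Complex.conj_im, Complex.ofReal_re,
    Complex.ofReal_im, Complex.re_ofNat, Complex.im_ofNat, Complex.ofReal_mul,
    Complex.neg_re, Complex.neg_im, Complex.ofReal_sub, Complex.one_re, Complex.one_im,
    Complex.sub_re, Complex.sub_im, Complex.ofReal_one, Complex.ofReal_ofNat]
  ring

lemma grad_of_hasFDerivAt {f : ℂ → ℝ} {c x : ℂ} (h : HasFDerivAt f (mulRe c) x) :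
    grad f x = (starRingEnd ℂ) c := by
  rw [grad, h.fderiv]
  apply Complex.ext <;>
    simp [Complex.mul_re, Complex.mul_im] <;> ring

lemma grad_congr {f g : ℂ → ℝ} {x : ℂ} (h : f =ᶠ[𝓝 x] g) : grad f x = grad g x := by
  unfold grad
  rw [h.fderiv_eq]

lemma comp_curve {f : ℂ → ℂ} {f' : ℂ} {z : ℝ → ℂ} {u : ℂ} {I : Set ℝ} {t : ℝ}
    (hf : HasDerivAt f f' (z t)) (hz : HasDerivWithinAt z u I t) :
    HasDerivWithinAt (fun s => f (z s)) (f' * u) I t := by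
  have h := (hf.hasFDerivAt.restrictScalars ℝ).comp_hasDerivWithinAt t hz
  simpa [Function.comp_def, mul_comm] using h

/-! ### Nonvanishing of the derivative of an injective holomorphic map -/

lemma zeta_pow_ne {n : ℕ} (hn : 2 ≤ n) :
    Complex.exp (((2 * π / n : ℝ) : ℂ) * Complex.I) ≠ 1 := by
  intro hone
  rw [Complex.exp_eq_one_iff] at hone
  obtain ⟨k, hk⟩ := hone
  have him := congrArg Complex.im hk
  simp [Complex.mul_im, Complex.ofReal_re, Complex.ofReal_im] at him
  have hπ : (0:ℝ) < π := Real.pi_pos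
  have hn0 : (0:ℝ) < (n:ℝ) := by positivity
  have hk' : (k : ℝ) = 1 / n := by
    field_simp at him ⊢
    nlinarith [him]
  have h1 : (0:ℝ) < (k:ℝ) := by rw [hk']; positivity
  have h2 : (k:ℝ) < 1 := by
    rw [hk']
    rw [div_lt_one hn0]
    exact_mod_cast by omega
  have : (0:ℤ) < k := by exact_mod_cast h1
  have : (1:ℤ) ≤ k := this
  have : (1:ℝ) ≤ (k:ℝ) := by exact_mod_cast this
  linarith

lemma deriv_ne_zero_of_injOn {f : ℂ → ℂ} {U : Set ℂ} (hU : IsOpen U)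
    (hf : DifferentiableOn ℂ f U) (hinj : Set.InjOn f U) {p : ℂ} (hp : p ∈ U) :
    deriv f p ≠ 0 := by
  intro hd0
  have hA : AnalyticAt ℂ f p := (hf.analyticOnNhd hU) p hp
  have hFA : AnalyticAt ℂ (fun z => f z - f p) p := hA.sub analyticAt_const
  by_cases htop : analyticOrderAt (fun z => f z - f p) p = ⊤
  · have hev : ∀ᶠ z in 𝓝 p, f z - f p = 0 := analyticOrderAt_eq_top.mp htop
    obtain ⟨ε, hε, hball⟩ := Metric.eventually_nhds_iff_ball.mp
      (hev.and (hU.eventually_mem hp))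
    set z := p + (ε / 2 : ℝ) with hz
    have hzball : z ∈ Metric.ball p ε := by
      simp only [hz, Metric.mem_ball, dist_self_add_left]
      rw [Complex.norm_real]
      rw [Real.norm_eq_abs, abs_of_pos (by linarith)]
      linarith
    obtain ⟨hfz, hzU⟩ := hball z hzball
    have hzp : z ≠ p := by
      simp only [hz, ne_eq, add_eq_left]
      exact_mod_cast (by positivity : (ε/2 : ℝ) ≠ 0)
    exact hzp (hinj hzU hp (sub_eq_zero.mp hfz))
  · obtain ⟨n, hn⟩ : ∃ n : ℕ, analyticOrderAt (fun z => f z - f p) p = n := by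
      lift analyticOrderAt (fun z => f z - f p) p to ℕ using htop with n hn
      exact ⟨n, rfl⟩
    obtain ⟨g, hgA, hgp, hev⟩ := (hFA.analyticOrderAt_eq_natCast (n := n)).mp hn
    match n, hn with
    | 0, hn =>
      have := hev.self_of_nhds
      simp at this
      exact hgp this.symm
    | 1, hn =>
      have hd1 : deriv (fun z => f z - f p) p = deriv (fun z => (z - p) ^ 1 • g z) p :=
        Filter.EventuallyEq.deriv_eq hev
      have hgd : HasDerivAt g (deriv g p) p := hgA.differentiableAt.hasDerivAt
      have hprod : HasDerivAt (fun z : ℂ => (z - p) ^ 1 • g z)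
          ((1 : ℂ) * g p + (p - p) * deriv g p) p := by
        simpa [pow_one, smul_eq_mul, Pi.mul_def] using
          (((hasDerivAt_id p).sub_const p).mul hgd)
      rw [hprod.deriv] at hd1
      rw [deriv_sub_const, hd0] at hd1
      simp at hd1
      exact hgp hd1.symm
    | (m + 2), hn =>
      set n := m + 2
      have hn2 : 2 ≤ n := by omega
      have hnC : (n : ℂ) ≠ 0 := by exact_mod_cast (by omega : n ≠ 0)
      set c := g p with hc
      set w := Complex.exp (Complex.log c / n) with hw
      have hwn : w ^ n = c := by
        rw [hw, ← Complex.exp_nat_mul, mul_div_cancel₀ _ hnC, Complex.exp_log hgp]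
      have hw0 : w ≠ 0 := Complex.exp_ne_zero _
      set k := fun z : ℂ => w * Complex.exp (Complex.log (g z / c) / n) with hk
      have hgc1 : g p / c = 1 := div_self hgp
      have hkA : AnalyticAt ℂ k p := by
        apply analyticAt_const.mul
        apply AnalyticAt.cexp
        apply AnalyticAt.div _ analyticAt_const hnC
        have hdivA : AnalyticAt ℂ (fun z => g z / c) p := hgA.div analyticAt_const hgp
        have hlog : AnalyticAt ℂ Complex.log (g p / c) := by
          rw [hgc1]
          exact analyticAt_clog (by simp [Complex.slitPlane])
        have hcomp := AnalyticAt.comp (f := fun z => g z / c) (x := p) hlog hdivA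
        simpa [Function.comp_def] using hcomp
      set h := fun z : ℂ => (z - p) * k z with hh
      have hhA : AnalyticAt ℂ h p :=
        ((analyticAt_id.sub analyticAt_const)).mul hkA
      have hkp : k p = w := by
        simp [hk, hgc1, Complex.log_one]
      have hhp : h p = 0 := by simp [hh]
      have hhd : HasDerivAt h w p := by
        have := (((hasDerivAt_id p).sub_const p).mul hkA.differentiableAt.hasDerivAt)
        simpa [hkp, Pi.mul_def] using this
      have hnotconst : ¬ ∀ᶠ z in 𝓝 p, h z = h p := by
        intro hcst
        have : deriv h p = 0 := by
          rw [Filter.EventuallyEq.deriv_eq hcst]; exact deriv_const _ _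
        rw [hhd.deriv] at this
        exact hw0 this
      have hmap : 𝓝 (h p) ≤ Filter.map h (𝓝 p) :=
        hhA.eventually_constant_or_nhds_le_map_nhds.resolve_left hnotconst
      have hgne : ∀ᶠ z in 𝓝 p, g z ≠ 0 :=
        hgA.continuousAt.eventually_ne hgp
      have hpow : ∀ᶠ z in 𝓝 p, h z ^ n = f z - f p := by
        filter_upwards [hev, hgne] with z h1 h2
        have hgcne : g z / c ≠ 0 := div_ne_zero h2 hgp
        rw [hh, h1]
        simp only [mul_pow, smul_eq_mul]
        congr 1
        rw [hk, mul_pow, hwn, ← Complex.exp_nat_mul, mul_div_cancel₀ _ hnC,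
          Complex.exp_log hgcne]
        field_simp
      obtain ⟨V, hV, hVsub⟩ : ∃ V ∈ 𝓝 p, ∀ z ∈ V, (h z ^ n = f z - f p ∧ z ∈ U) := by
        obtain ⟨V, hV, hVs⟩ := Filter.eventually_iff_exists_mem.mp
          (hpow.and (hU.eventually_mem hp))
        exact ⟨V, hV, hVs⟩
      have himg : h '' V ∈ 𝓝 (0 : ℂ) := by
        rw [← hhp]
        apply hmap
        rw [Filter.mem_map]
        exact Filter.mem_of_superset hV (Set.subset_preimage_image h V)
      obtain ⟨ε, hε, hball⟩ := Metric.mem_nhds_iff.mp himg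
      set ζ := Complex.exp (((2 * π / n : ℝ) : ℂ) * Complex.I) with hζ
      have hζn : ζ ^ n = 1 := by
        rw [hζ, ← Complex.exp_nat_mul]
        rw [Complex.exp_eq_one_iff]
        refine ⟨1, ?_⟩
        have h' : ((m : ℂ) + 1 + 1) ≠ 0 := by
          have he : ((m:ℂ)+1+1) = ((m+2 : ℕ) : ℂ) := by push_cast; ring
          rw [he]
          exact Nat.cast_ne_zero.mpr (by omega)
        push_cast
        field_simp
      have hζ1 : ζ ≠ 1 := zeta_pow_ne hn2
      have hζabs : ‖ζ‖ = 1 := Complex.norm_exp_ofReal_mul_I _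
      set w₀ : ℂ := ((ε / 2 : ℝ) : ℂ) with hw₀
      have hw₀0 : w₀ ≠ 0 := by
        rw [hw₀]; exact_mod_cast (by positivity : (ε/2:ℝ) ≠ 0)
      have hw₀ball : w₀ ∈ Metric.ball (0:ℂ) ε := by
        simp only [Metric.mem_ball, dist_zero_right, hw₀, Complex.norm_real,
          Real.norm_eq_abs, abs_of_pos (by linarith : (0:ℝ) < ε/2)]
        linarith
      have hζw₀ball : ζ * w₀ ∈ Metric.ball (0:ℂ) ε := by
        simp only [Metric.mem_ball, dist_zero_right, norm_mul]
        rw [hζabs, one_mul]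
        simpa using hw₀ball
      obtain ⟨z₁, hz₁V, hz₁⟩ := hball hw₀ball
      obtain ⟨z₂, hz₂V, hz₂⟩ := hball hζw₀ball
      obtain ⟨hp1, hU1⟩ := hVsub z₁ hz₁V
      obtain ⟨hp2, hU2⟩ := hVsub z₂ hz₂V
      have hfeq : f z₁ = f z₂ := by
        have e1 : f z₁ - f p = w₀ ^ n := by rw [← hp1, hz₁]
        have e2 : f z₂ - f p = w₀ ^ n := by
          rw [← hp2, hz₂, mul_pow, hζn, one_mul]
        have := e1.trans e2.symm
        linear_combination this
      have hz12 : z₁ = z₂ := hinj hU1 hU2 hfeq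
      rw [hz12, hz₂] at hz₁
      have : ζ = 1 := by
        have h' : ζ * w₀ = 1 * w₀ := by rw [one_mul]; exact hz₁
        exact mul_right_cancel₀ hw₀0 h'
      exact hζ1 this

/-! ### Pointwise identities -/

lemma log_abs_eq (w : ℂ) : Real.log ‖w‖ = Real.log (Complex.normSq w) / 2 := by
  rw [Complex.norm_def, Real.log_sqrt (Complex.normSq_nonneg w)]

lemma robin_point (φ : ℂ → ℂ) (x : ℂ) :
    robin φ x =
    (1/(4*π)) * Real.log (Complex.normSq (deriv φ x)) -
      (1/(2*π)) * Real.log (1 - Complex.normSq (φ x)) := by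
  rw [robin, log_abs_eq, Complex.sq_norm]
  ring

lemma gamma_point (φ : ℂ → ℂ) {x y : ℂ} (hxy : x ≠ y) (hfxy : φ x ≠ φ y) :
    gammaReg φ x y + (1 / (4 * π)) * Real.log (‖x - y‖ ^ 2) =
    (1/(4*π)) * Real.log (Complex.normSq (φ x - φ y)) -
      (1/(4*π)) * Real.log (Complex.normSq (1 - φ x * (starRingEnd ℂ) (φ y))) := by
  have h1 : ‖φ x - φ y‖ ≠ 0 := by
    simpa [sub_eq_zero] using hfxy
  have h2 : ‖x - y‖ ≠ 0 := by
    simpa [sub_eq_zero] using hxy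
  rw [gammaReg, Real.log_div h1 h2, Real.log_pow, log_abs_eq, log_abs_eq, log_abs_eq]
  push_cast
  ring

/-! ### Gradient computations -/

lemma grad_robin (φ : ℂ → ℂ) {p : ℂ}
    (hφd : HasDerivAt φ (deriv φ p) p)
    (hdd : HasDerivAt (deriv φ) (deriv (deriv φ) p) p)
    (hD1 : deriv φ p ≠ 0)
    (hP : Complex.normSq (φ p) ≠ 1) :
    grad (robin φ) p = (starRingEnd ℂ)
      (((1/(4*π) : ℝ) : ℂ) * (((2/Complex.normSq (deriv φ p) : ℝ) : ℂ) *
          ((starRingEnd ℂ) (deriv φ p) * deriv (deriv φ) p))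
        - ((1/(2*π) : ℝ) : ℂ) * (((2/(1 - Complex.normSq (φ p)) : ℝ) : ℂ) *
          (-((starRingEnd ℂ) (φ p) * deriv φ p)))) := by
  have h1 := hasFDerivAt_log_normSq_comp hdd hD1
  have h2 := hasFDerivAt_log_one_sub_normSq_comp hφd hP
  have h3 := (h1.const_mul (1/(4*π))).sub (h2.const_mul (1/(2*π)))
  rw [smul_mulRe, smul_mulRe, mulRe_sub] at h3
  have h4 : (fun x => (1/(4*π)) * Real.log (Complex.normSq (deriv φ x)) -
      (1/(2*π)) * Real.log (1 - Complex.normSq (φ x))) = robin φ := by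
    funext x
    rw [robin_point]
  rw [← h4]
  exact grad_of_hasFDerivAt h3

lemma grad_gamma (φ : ℂ → ℂ) {U : Set ℂ} (hU : IsOpen U) {p q : ℂ} (hp : p ∈ U)
    (hpq : p ≠ q)
    (hφd : HasDerivAt φ (deriv φ p) p)
    (hPQ : φ p ≠ φ q)
    (hden : (1 : ℂ) - φ p * (starRingEnd ℂ) (φ q) ≠ 0)
    (hinj : ∀ x ∈ U, x ≠ q → φ x ≠ φ q) :
    grad (fun x => gammaReg φ x q) p = (starRingEnd ℂ)
      (((1/(4*π) : ℝ) : ℂ) * (((2/Complex.normSq (φ p - φ q) : ℝ) : ℂ) *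
          ((starRingEnd ℂ) (φ p - φ q) * deriv φ p))
        - ((1/(4*π) : ℝ) : ℂ) * (((2/Complex.normSq (p - q) : ℝ) : ℂ) *
          ((starRingEnd ℂ) (p - q) * 1))
        - ((1/(4*π) : ℝ) : ℂ) * (((2/Complex.normSq (1 - φ p * (starRingEnd ℂ) (φ q)) : ℝ) : ℂ) *
          ((starRingEnd ℂ) (1 - φ p * (starRingEnd ℂ) (φ q)) *
            (-(deriv φ p * (starRingEnd ℂ) (φ q)))))) := by
  have hf1 : HasDerivAt (fun x => φ x - φ q) (deriv φ p) p := hφd.sub_const _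
  have hf2 : HasDerivAt (fun x : ℂ => x - q) 1 p := (hasDerivAt_id p).sub_const q
  have hf3 : HasDerivAt (fun x => 1 - φ x * (starRingEnd ℂ) (φ q))
      (-(deriv φ p * (starRingEnd ℂ) (φ q))) p := by
    simpa using (hφd.mul_const ((starRingEnd ℂ) (φ q))).const_sub 1
  have h1 := hasFDerivAt_log_normSq_comp hf1 (sub_ne_zero.mpr hPQ)
  have h2 := hasFDerivAt_log_normSq_comp hf2 (sub_ne_zero.mpr hpq)
  have h3 := hasFDerivAt_log_normSq_comp hf3 hden
  have hc := ((h1.const_mul (1/(4*π))).sub (h2.const_mul (1/(4*π)))).sub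
    (h3.const_mul (1/(4*π)))
  rw [smul_mulRe, smul_mulRe, smul_mulRe, mulRe_sub, mulRe_sub] at hc
  have hev : (fun x => gammaReg φ x q) =ᶠ[𝓝 p] fun x =>
      (1/(4*π)) * Real.log (Complex.normSq (φ x - φ q))
        - (1/(4*π)) * Real.log (Complex.normSq (x - q))
        - (1/(4*π)) * Real.log (Complex.normSq (1 - φ x * (starRingEnd ℂ) (φ q))) := by
    have hWopen : IsOpen (U ∩ {x | x ≠ q}) := hU.inter isOpen_ne
    have hpW : p ∈ U ∩ {x | x ≠ q} := ⟨hp, hpq⟩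
    filter_upwards [hWopen.mem_nhds hpW] with x hx
    obtain ⟨hxU, hxq⟩ := hx
    have hg := gamma_point φ hxq (hinj x hxU hxq)
    have hlog2 : Real.log (‖x - q‖ ^ 2) = Real.log (Complex.normSq (x - q)) := by
      rw [Complex.sq_norm]
    rw [hlog2] at hg
    linarith [hg]
  rw [grad_congr hev]
  exact grad_of_hasFDerivAt hc

/-! ### The key algebraic identity -/

set_option maxHeartbeats 2000000 in
lemma step_collect (a₁ a₂ : ℝ) (p q P Q D1 D2 E1 E2 u v : ℂ)
    (s0 s1 s2 d1 d2 r1 r2 : ℝ) :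
    ((a₁^2/2) * ((1/(4*π)) * ((((2/d1 : ℝ) : ℂ) * ((starRingEnd ℂ) D1 * E1)) * u).re
        - (1/(2*π)) * ((((2/r1 : ℝ) : ℂ) * (-((starRingEnd ℂ) P * D1))) * u).re)
    + (a₂^2/2) * ((1/(4*π)) * ((((2/d2 : ℝ) : ℂ) * ((starRingEnd ℂ) D2 * E2)) * v).re
        - (1/(2*π)) * ((((2/r2 : ℝ) : ℂ) * (-((starRingEnd ℂ) Q * D2))) * v).re)
    + (a₁*a₂) * ((1/(4*π)) * ((((2/s1 : ℝ) : ℂ) * ((starRingEnd ℂ) (P - Q) * 1)) * (D1*u - D2*v)).re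
        - (1/(4*π)) * ((((2/s2 : ℝ) : ℂ) * ((starRingEnd ℂ) (1 - P * (starRingEnd ℂ) Q) * 1)) *
            (-(D1*u*(starRingEnd ℂ) Q + P * (starRingEnd ℂ) (D2*v)))).re))
    = (((a₁ : ℂ) * (starRingEnd ℂ) (((a₁/2 : ℝ) : ℂ) * (starRingEnd ℂ) (((1/(4*π) : ℝ) : ℂ) * (((2/d1 : ℝ) : ℂ) * ((starRingEnd ℂ) D1 * E1)) - ((1/(2*π) : ℝ) : ℂ) * (((2/r1 : ℝ) : ℂ) * (-((starRingEnd ℂ) P * D1)))) + (a₂ : ℂ) * (((1/(2*π*s0) : ℝ) : ℂ) * (p - q) + (starRingEnd ℂ) (((1/(4*π) : ℝ) : ℂ) * (((2/s1 : ℝ) : ℂ) * ((starRingEnd ℂ) (P - Q) * D1)) - ((1/(4*π) : ℝ) : ℂ) * (((2/s0 : ℝ) : ℂ) * ((starRingEnd ℂ) (p - q) * 1)) - ((1/(4*π) : ℝ) : ℂ) * (((2/s2 : ℝ) : ℂ) * ((starRingEnd ℂ) (1 - P * (starRingEnd ℂ) Q) * (-(D1 * (starRingEnd ℂ) Q))))))))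 * u).re
      + (((a₂ : ℂ) * (starRingEnd ℂ) (((a₂/2 : ℝ) : ℂ) * (starRingEnd ℂ) (((1/(4*π) : ℝ) : ℂ) * (((2/d2 : ℝ) : ℂ) * ((starRingEnd ℂ) D2 * E2)) - ((1/(2*π) : ℝ) : ℂ) * (((2/r2 : ℝ) : ℂ) * (-((starRingEnd ℂ) Q * D2)))) + (a₁ : ℂ) * (((1/(2*π*s0) : ℝ) : ℂ) * (q - p) + (starRingEnd ℂ) (((1/(4*π) : ℝ) : ℂ) * (((2/s1 : ℝ) : ℂ) * ((starRingEnd ℂ) (Q - P) * D2)) - ((1/(4*π) : ℝ) : ℂ) * (((2/s0 : ℝ) : ℂ) * ((starRingEnd ℂ) (q - p) * 1)) - ((1/(4*π) : ℝ) : ℂ) * (((2/s2 : ℝ) : ℂ) * ((starRingEnd ℂ) (1 - Q * (starRingEnd ℂ) P) * (-(D2 * (starRingEnd ℂ) P)))))))) * v).re := by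
  simp only [map_mul, map_sub, map_add, map_one, map_div₀, map_neg, Complex.conj_conj,
    Complex.conj_ofReal, Complex.mul_re, Complex.mul_im, Complex.sub_re, Complex.sub_im,
    Complex.add_re, Complex.add_im, Complex.neg_re, Complex.neg_im, Complex.one_re,
    Complex.one_im, Complex.ofReal_re, Complex.ofReal_im, Complex.conj_re, Complex.conj_im,
    Complex.normSq_apply, Complex.ofReal_mul]
  ring

lemma re_aux (a : ℝ) (g : ℂ) :
    (((a:ℂ) * (starRingEnd ℂ) g) * (Complex.I * g)).re = 0 := by
  have h : ((a:ℂ) * (starRingEnd ℂ) g) * (Complex.I * g)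
      = (a:ℂ) * Complex.I * (g * (starRingEnd ℂ) g) := by ring
  rw [h, Complex.mul_conj]
  simp [Complex.mul_re, Complex.mul_im]

lemma E_zero (a₁ a₂ : ℝ) (p q P Q D1 D2 E1 E2 u v : ℂ)
    (s0 s1 s2 d1 d2 r1 r2 : ℝ)
    (hu : u = Complex.I * (((a₁/2 : ℝ) : ℂ) * (starRingEnd ℂ) (((1/(4*π) : ℝ) : ℂ) * (((2/d1 : ℝ) : ℂ) * ((starRingEnd ℂ) D1 * E1)) - ((1/(2*π) : ℝ) : ℂ) * (((2/r1 : ℝ) : ℂ) * (-((starRingEnd ℂ) P * D1)))) + (a₂ : ℂ) * (((1/(2*π*s0) : ℝ) : ℂ) * (p - q) + (starRingEnd ℂ) (((1/(4*π) : ℝ) : ℂ) * (((2/s1 : ℝ) : ℂ) * ((starRingEnd ℂ) (P - Q) * D1)) - ((1/(4*π) : ℝ) : ℂ) * (((2/s0 : ℝ) : ℂ) * ((starRingEnd ℂ) (p - q) * 1)) - ((1/(4*π) : ℝ) : ℂ) * (((2/s2 : ℝ) : ℂ) * ((starRingEnd ℂ) (1 - P * (starRingEnd ℂ) Q) * (-(D1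 * (starRingEnd ℂ) Q))))))))
    (hv : v = Complex.I * (((a₂/2 : ℝ) : ℂ) * (starRingEnd ℂ) (((1/(4*π) : ℝ) : ℂ) * (((2/d2 : ℝ) : ℂ) * ((starRingEnd ℂ) D2 * E2)) - ((1/(2*π) : ℝ) : ℂ) * (((2/r2 : ℝ) : ℂ) * (-((starRingEnd ℂ) Q * D2)))) + (a₁ : ℂ) * (((1/(2*π*s0) : ℝ) : ℂ) * (q - p) + (starRingEnd ℂ) (((1/(4*π) : ℝ) : ℂ) * (((2/s1 : ℝ) : ℂ) * ((starRingEnd ℂ) (Q - P) * D2)) - ((1/(4*π) : ℝ) : ℂ) * (((2/s0 : ℝ) : ℂ) * ((starRingEnd ℂ) (q - p) * 1)) - ((1/(4*π) : ℝ) : ℂ) * (((2/s2 : ℝ) : ℂ) * ((starRingEnd ℂ) (1 - Q * (starRingEnd ℂ) P) * (-(D2 * (starRingEnd ℂ) P)))))))) :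
    ((a₁^2/2) * ((1/(4*π)) * ((((2/d1 : ℝ) : ℂ) * ((starRingEnd ℂ) D1 * E1)) * u).re
        - (1/(2*π)) * ((((2/r1 : ℝ) : ℂ) * (-((starRingEnd ℂ) P * D1))) * u).re)
    + (a₂^2/2) * ((1/(4*π)) * ((((2/d2 : ℝ) : ℂ) * ((starRingEnd ℂ) D2 * E2)) * v).re
        - (1/(2*π)) * ((((2/r2 : ℝ) : ℂ) * (-((starRingEnd ℂ) Q * D2))) * v).re)
    + (a₁*a₂) * ((1/(4*π)) * ((((2/s1 : ℝ) : ℂ) * ((starRingEnd ℂ) (P - Q) * 1)) * (D1*u - D2*v)).re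
        - (1/(4*π)) * ((((2/s2 : ℝ) : ℂ) * ((starRingEnd ℂ) (1 - P * (starRingEnd ℂ) Q) * 1)) *
            (-(D1*u*(starRingEnd ℂ) Q + P * (starRingEnd ℂ) (D2*v)))).re)) = 0 := by
  rw [step_collect a₁ a₂ p q P Q D1 D2 E1 E2 u v s0 s1 s2 d1 d2 r1 r2]
  rw [hu, hv, re_aux, re_aux, add_zero]

/-! ### The main theorem -/

set_option maxRecDepth 16000 in
set_option maxHeartbeats 1600000 in
theorem stmt7 (Ω : Set ℂ) (φ : ℂ → ℂ) (a₁ a₂ : ℝ)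
    (hopen : IsOpen Ω) (hne : Ω ≠ Set.univ) (h0 : (0 : ℂ) ∈ Ω)
    (hconn : IsConnected Ω) (hsc : SimplyConnectedSpace ↥Ω)
    (hdiff : DifferentiableOn ℂ φ Ω)
    (hbij : Set.BijOn φ Ω (Metric.ball 0 1))
    (hφ0 : φ 0 = 0)
    (I : Set ℝ) (hI : Convex ℝ I)
    (z₁ z₂ : ℝ → ℂ)
    (hsol : ∀ t ∈ I,
      z₁ t ∈ Ω ∧ z₂ t ∈ Ω ∧ z₁ t ≠ z₂ t ∧
        HasDerivWithinAt z₁ (vortexRHS φ a₁ a₂ (z₁ t) (z₂ t)) I t ∧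
        HasDerivWithinAt z₂ (vortexRHS φ a₂ a₁ (z₂ t) (z₁ t)) I t) :
    ∀ s ∈ I, ∀ t ∈ I,
      (1 / 2) * (a₁ ^ 2 * robin φ (z₁ s) + a₂ ^ 2 * robin φ (z₂ s)) +
          a₁ * a₂ * (gammaReg φ (z₁ s) (z₂ s) +
            (1 / (4 * π)) * Real.log (‖z₁ s - z₂ s‖ ^ 2)) =
        (1 / 2) * (a₁ ^ 2 * robin φ (z₁ t) + a₂ ^ 2 * robin φ (z₂ t)) +
          a₁ * a₂ * (gammaReg φ (z₁ t) (z₂ t) +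
            (1 / (4 * π)) * Real.log (‖z₁ t - z₂ t‖ ^ 2)) := by
  have hAn : AnalyticOnNhd ℂ φ Ω := hdiff.analyticOnNhd hopen
  have hAd : AnalyticOnNhd ℂ (deriv φ) Ω := hAn.deriv
  set H : ℝ → ℝ := fun τ =>
    (1 / 2) * (a₁ ^ 2 * robin φ (z₁ τ) + a₂ ^ 2 * robin φ (z₂ τ)) +
      a₁ * a₂ * (gammaReg φ (z₁ τ) (z₂ τ) +
        (1 / (4 * π)) * Real.log (‖z₁ τ - z₂ τ‖ ^ 2)) with hHdef
  set Hs : ℝ → ℝ := fun σ =>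
    (a₁^2/2) * ((1/(4*π)) * Real.log (Complex.normSq (deriv φ (z₁ σ)))
        - (1/(2*π)) * Real.log (1 - Complex.normSq (φ (z₁ σ))))
    + (a₂^2/2) * ((1/(4*π)) * Real.log (Complex.normSq (deriv φ (z₂ σ)))
        - (1/(2*π)) * Real.log (1 - Complex.normSq (φ (z₂ σ))))
    + (a₁*a₂) * ((1/(4*π)) * Real.log (Complex.normSq (φ (z₁ σ) - φ (z₂ σ)))
        - (1/(4*π)) * Real.log (Complex.normSq (1 - φ (z₁ σ) * (starRingEnd ℂ) (φ (z₂ σ)))))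
    with hHsdef
  -- pointwise facts on I
  have hfacts : ∀ τ ∈ I, H τ = Hs τ := by
    intro τ hτ
    obtain ⟨hp, hq, hpq, -, -⟩ := hsol τ hτ
    have hPQ : φ (z₁ τ) ≠ φ (z₂ τ) := fun h => hpq (hbij.injOn hp hq h)
    have hg := gamma_point φ hpq hPQ
    rw [hHdef, hHsdef]
    simp only
    rw [robin_point φ (z₁ τ), robin_point φ (z₂ τ), hg]
    ring
  have key : ∀ τ ∈ I, HasDerivWithinAt H 0 I τ := by
    intro τ hτ
    obtain ⟨hp, hq, hpq, hz1d, hz2d⟩ := hsol τ hτ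
    set p := z₁ τ with hpdef
    set q := z₂ τ with hqdef
    set u := vortexRHS φ a₁ a₂ p q with hudef
    set v := vortexRHS φ a₂ a₁ q p with hvdef
    -- analytic facts at p
    have hφdp : HasDerivAt φ (deriv φ p) p :=
      (hdiff.differentiableAt (hopen.mem_nhds hp)).hasDerivAt
    have hφdq : HasDerivAt φ (deriv φ q) q :=
      (hdiff.differentiableAt (hopen.mem_nhds hq)).hasDerivAt
    have hddp : HasDerivAt (deriv φ) (deriv (deriv φ) p) p :=
      (hAd p hp).differentiableAt.hasDerivAt
    have hddq : HasDerivAt (deriv φ) (deriv (deriv φ) q) q :=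
      (hAd q hq).differentiableAt.hasDerivAt
    have hD1ne : deriv φ p ≠ 0 := deriv_ne_zero_of_injOn hopen hdiff hbij.injOn hp
    have hD2ne : deriv φ q ≠ 0 := deriv_ne_zero_of_injOn hopen hdiff hbij.injOn hq
    have hPlt : ‖φ p‖ < 1 := by
      have := hbij.mapsTo hp
      simpa [Metric.mem_ball, Complex.dist_eq] using this
    have hQlt : ‖φ q‖ < 1 := by
      have := hbij.mapsTo hq
      simpa [Metric.mem_ball, Complex.dist_eq] using this
    have hSPlt : Complex.normSq (φ p) < 1 := by
      rw [← Complex.sq_norm]; nlinarith [norm_nonneg (φ p)]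
    have hSQlt : Complex.normSq (φ q) < 1 := by
      rw [← Complex.sq_norm]; nlinarith [norm_nonneg (φ q)]
    have hSPne : Complex.normSq (φ p) ≠ 1 := ne_of_lt hSPlt
    have hSQne : Complex.normSq (φ q) ≠ 1 := ne_of_lt hSQlt
    have hPQ : φ p ≠ φ q := fun h => hpq (hbij.injOn hp hq h)
    have hQP : φ q ≠ φ p := hPQ.symm
    have hden1 : (1 : ℂ) - φ p * (starRingEnd ℂ) (φ q) ≠ 0 := by
      intro h
      have h1 : φ p * (starRingEnd ℂ) (φ q) = 1 := by linear_combination -h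
      have h2 := congrArg (‖·‖) h1
      rw [norm_mul, norm_one, Complex.norm_conj] at h2
      nlinarith [norm_nonneg (φ p), norm_nonneg (φ q)]
    have hden2 : (1 : ℂ) - φ q * (starRingEnd ℂ) (φ p) ≠ 0 := by
      intro h
      have h1 : φ q * (starRingEnd ℂ) (φ p) = 1 := by linear_combination -h
      have h2 := congrArg (‖·‖) h1
      rw [norm_mul, norm_one, Complex.norm_conj] at h2
      nlinarith [norm_nonneg (φ p), norm_nonneg (φ q)]
    -- gradients
    have hgr1 := grad_robin φ hφdp hddp hD1ne hSPne
    have hgr2 := grad_robin φ hφdq hddq hD2ne hSQne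
    have hinj1 : ∀ x ∈ Ω, x ≠ q → φ x ≠ φ q := fun x hx hxq h => hxq (hbij.injOn hx hq h)
    have hinj2 : ∀ x ∈ Ω, x ≠ p → φ x ≠ φ p := fun x hx hxp h => hxp (hbij.injOn hx hp h)
    have hgg1 := grad_gamma φ hopen hp hpq hφdp hPQ hden1 hinj1
    have hgg2 := grad_gamma φ hopen hq (Ne.symm hpq) hφdq hQP hden2 hinj2
    -- symmetrize the normSq arguments in the second gradient
    have e1 : Complex.normSq (φ q - φ p) = Complex.normSq (φ p - φ q) := by
      rw [← Complex.normSq_neg, neg_sub]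
    have e2 : Complex.normSq (q - p) = Complex.normSq (p - q) := by
      rw [← Complex.normSq_neg, neg_sub]
    have e3 : Complex.normSq (1 - φ q * (starRingEnd ℂ) (φ p))
        = Complex.normSq (1 - φ p * (starRingEnd ℂ) (φ q)) := by
      rw [← Complex.normSq_conj]
      congr 1
      simp only [map_sub, map_one, map_mul, Complex.conj_conj]
      ring
    rw [e1, e2, e3] at hgg2
    -- u and v in Hamiltonian form
    have hu : u = Complex.I * (((a₁/2 : ℝ) : ℂ) * (starRingEnd ℂ) (((1/(4*π) : ℝ) : ℂ) * (((2/Complex.normSq (deriv φ p) : ℝ) : ℂ) * ((starRingEnd ℂ) (deriv φ p) * (deriv (deriv φ) p))) - ((1/(2*π) : ℝ) : ℂ) * (((2/(1 - Complex.normSq (φ p)) : ℝ) : ℂ) * (-((starRingEnd ℂ) (φ p) * (deriv φ p))))) + (a₂ : ℂ) * (((1/(2*π*Complex.normSq (p - q)) : ℝ) : ℂ) * (p - q) + (starRingEnd ℂ) (((1/(4*π) : ℝ) : ℂ) * (((2/Complex.normSq (φ p - φ q) : ℝ) : ℂ) * ((starRingEnd ℂ) ((φ p) - (φ q)) * (deriv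 φ p))) - ((1/(4*π) : ℝ) : ℂ) * (((2/Complex.normSq (p - q) : ℝ) : ℂ) * ((starRingEnd ℂ) (p - q) * 1)) - ((1/(4*π) : ℝ) : ℂ) * (((2/Complex.normSq (1 - φ p * (starRingEnd ℂ) (φ q)) : ℝ) : ℂ) * ((starRingEnd ℂ) (1 - (φ p) * (starRingEnd ℂ) (φ q)) * (-((deriv φ p) * (starRingEnd ℂ) (φ q)))))))) := by
      rw [hudef, vortexRHS, hgr1, hgg1, Complex.sq_norm]
      push_cast
      ring
    have hv : v = Complex.I * (((a₂/2 : ℝ) : ℂ) * (starRingEnd ℂ) (((1/(4*π) : ℝ) : ℂ) * (((2/Complex.normSq (deriv φ q) : ℝ) : ℂ) * ((starRingEnd ℂ) (deriv φ q) * (deriv (deriv φ) q))) - ((1/(2*π) : ℝ) : ℂ) * (((2/(1 - Complex.normSq (φ q)) : ℝ) : ℂ) * (-((starRingEnd ℂ) (φ q) * (deriv φ q))))) + (a₁ : ℂ) * (((1/(2*π*Complex.normSq (p - q)) : ℝ) : ℂ) * (q - p) + (starRingEnd ℂ) (((1/(4*π) : ℝ) : ℂ) * (((2/Complex.normSq (φ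 p - φ q) : ℝ) : ℂ) * ((starRingEnd ℂ) ((φ q) - (φ p)) * (deriv φ q))) - ((1/(4*π) : ℝ) : ℂ) * (((2/Complex.normSq (p - q) : ℝ) : ℂ) * ((starRingEnd ℂ) (q - p) * 1)) - ((1/(4*π) : ℝ) : ℂ) * (((2/Complex.normSq (1 - φ p * (starRingEnd ℂ) (φ q)) : ℝ) : ℂ) * ((starRingEnd ℂ) (1 - (φ q) * (starRingEnd ℂ) (φ p)) * (-((deriv φ q) * (starRingEnd ℂ) (φ p)))))))) := by
      rw [hvdef, vortexRHS, hgr2, hgg2, Complex.sq_norm, e2]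
      push_cast
      ring
    clear_value u v
    -- derivative blocks along the curve
    have h1 : HasDerivWithinAt (fun σ => Real.log (Complex.normSq (deriv φ (z₁ σ))))
        (((((2/Complex.normSq (deriv φ p) : ℝ) : ℂ) *
          ((starRingEnd ℂ) (deriv φ p) * (deriv (deriv φ) p))) * u).re) I τ := by
      have := (hasFDerivAt_log_normSq_comp hddp hD1ne).comp_hasDerivWithinAt τ hz1d
      simpa [Function.comp_def] using this
    have h2 : HasDerivWithinAt (fun σ => Real.log (1 - Complex.normSq (φ (z₁ σ))))
        (((((2/(1 - Complex.normSq (φ p)) : ℝ) : ℂ) *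
          (-((starRingEnd ℂ) (φ p) * deriv φ p))) * u).re) I τ := by
      have := (hasFDerivAt_log_one_sub_normSq_comp hφdp hSPne).comp_hasDerivWithinAt τ hz1d
      simpa [Function.comp_def] using this
    have h3 : HasDerivWithinAt (fun σ => Real.log (Complex.normSq (deriv φ (z₂ σ))))
        (((((2/Complex.normSq (deriv φ q) : ℝ) : ℂ) *
          ((starRingEnd ℂ) (deriv φ q) * (deriv (deriv φ) q))) * v).re) I τ := by
      have := (hasFDerivAt_log_normSq_comp hddq hD2ne).comp_hasDerivWithinAt τ hz2d
      simpa [Function.comp_def] using this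
    have h4 : HasDerivWithinAt (fun σ => Real.log (1 - Complex.normSq (φ (z₂ σ))))
        (((((2/(1 - Complex.normSq (φ q)) : ℝ) : ℂ) *
          (-((starRingEnd ℂ) (φ q) * deriv φ q))) * v).re) I τ := by
      have := (hasFDerivAt_log_one_sub_normSq_comp hφdq hSQne).comp_hasDerivWithinAt τ hz2d
      simpa [Function.comp_def] using this
    have hw1 : HasDerivWithinAt (fun σ => φ (z₁ σ)) (deriv φ p * u) I τ :=
      comp_curve hφdp hz1d
    have hw2 : HasDerivWithinAt (fun σ => φ (z₂ σ)) (deriv φ q * v) I τ :=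
      comp_curve hφdq hz2d
    have hwsub : HasDerivWithinAt (fun σ => φ (z₁ σ) - φ (z₂ σ))
        (deriv φ p * u - deriv φ q * v) I τ := hw1.sub hw2
    have hwne : φ p - φ q ≠ 0 := sub_ne_zero.mpr hPQ
    have h5 : HasDerivWithinAt (fun σ => Real.log (Complex.normSq (φ (z₁ σ) - φ (z₂ σ))))
        (((((2/Complex.normSq (φ p - φ q) : ℝ) : ℂ) *
          ((starRingEnd ℂ) (φ p - φ q) * 1)) * (deriv φ p * u - deriv φ q * v)).re) I τ := by
      have hid : HasDerivAt (fun z : ℂ => z) 1 (φ p - φ q) := hasDerivAt_id _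
      have := (hasFDerivAt_log_normSq_comp hid hwne).comp_hasDerivWithinAt τ hwsub
      simpa [Function.comp_def] using this
    have hconj2 : HasDerivWithinAt (fun σ => (starRingEnd ℂ) (φ (z₂ σ)))
        ((starRingEnd ℂ) (deriv φ q * v)) I τ := by
      exact hw2.star
    have hmulc : HasDerivWithinAt (fun σ => φ (z₁ σ) * (starRingEnd ℂ) (φ (z₂ σ)))
        (deriv φ p * u * (starRingEnd ℂ) (φ q) + φ p * (starRingEnd ℂ) (deriv φ q * v))
        I τ := hw1.mul hconj2
    have hw₂sub : HasDerivWithinAt (fun σ => 1 - φ (z₁ σ) * (starRingEnd ℂ) (φ (z₂ σ)))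
        (-(deriv φ p * u * (starRingEnd ℂ) (φ q) + φ p * (starRingEnd ℂ) (deriv φ q * v)))
        I τ := by
      simpa using hmulc.const_sub 1
    have h6 : HasDerivWithinAt
        (fun σ => Real.log (Complex.normSq (1 - φ (z₁ σ) * (starRingEnd ℂ) (φ (z₂ σ)))))
        (((((2/Complex.normSq (1 - φ p * (starRingEnd ℂ) (φ q)) : ℝ) : ℂ) *
          ((starRingEnd ℂ) (1 - φ p * (starRingEnd ℂ) (φ q)) * 1)) *
          (-(deriv φ p * u * (starRingEnd ℂ) (φ q) + φ p * (starRingEnd ℂ) (deriv φ q * v)))).re)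
        I τ := by
      have hid : HasDerivAt (fun z : ℂ => z) 1 (1 - φ p * (starRingEnd ℂ) (φ q)) :=
        hasDerivAt_id _
      have := (hasFDerivAt_log_normSq_comp hid hden1).comp_hasDerivWithinAt τ hw₂sub
      simpa [Function.comp_def] using this
    -- assemble
    have hB1 := (h1.const_mul (1/(4*π))).sub (h2.const_mul (1/(2*π)))
    have hB2 := (h3.const_mul (1/(4*π))).sub (h4.const_mul (1/(2*π)))
    have hB3 := (h5.const_mul (1/(4*π))).sub (h6.const_mul (1/(4*π)))
    have hder := ((hB1.const_mul (a₁^2/2)).add (hB2.const_mul (a₂^2/2))).add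
      (hB3.const_mul (a₁*a₂))
    have hE0 := E_zero a₁ a₂ p q (φ p) (φ q) (deriv φ p) (deriv φ q)
      (deriv (deriv φ) p) (deriv (deriv φ) q) u v
      (Complex.normSq (p - q)) (Complex.normSq (φ p - φ q))
      (Complex.normSq (1 - φ p * (starRingEnd ℂ) (φ q)))
      (Complex.normSq (deriv φ p)) (Complex.normSq (deriv φ q))
      (1 - Complex.normSq (φ p)) (1 - Complex.normSq (φ q)) hu hv
    rw [hE0] at hder
    exact hder.congr hfacts (hfacts τ hτ)
  intro s hs t ht
  have hle := Convex.norm_image_sub_le_of_norm_hasDerivWithin_le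
    (f' := fun _ : ℝ => (0:ℝ)) (C := 0) key (fun x _ => by simp) hI hs ht
  have hts : H t = H s := by
    rwa [zero_mul, norm_le_zero_iff, sub_eq_zero] at hle
  exact hts.symm
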